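/- Let f : ℝ → ℂ be given by a finite Fourier series f(t) = Σ_{|k| ≤ N} b_k·e^{ikt}, and let α ∈ (0, π) with sin α ≠ 0. If f satisfies the functional equation f'(t+α) + f'(t−α) = cot(α)·(f(t+α) − f(t−α)) for all t, then for every k with b_k ≠ 0 one has k·cos(kα)·sin(α) = cos(α)·sin(kα), i.e. k·tan α = tan(kα) whenever cos(kα)·cos(α) ≠ 0. -/

import Mathlib

open Real Complex

lemma exp_int_integral (n : ℤ) (hn : n ≠ 0) :
    ∫ t in (0:ℝ)..(2*π), Complex.exp ((n:ℂ) * t * Complex.I) = 0 := by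
  have h : ∀ t:ℝ, (n:ℂ) * t * Complex.I = ((n:ℂ)*Complex.I) * t := fun t => by ring
  simp_rw [h]
  rw [integral_exp_mul_complex (mul_ne_zero (Int.cast_ne_zero.2 hn) Complex.I_ne_zero)]
  have h2 : Complex.exp ((n:ℂ)*Complex.I*(2*(π:ℂ))) = 1 := by
    rw [show ((n:ℂ)*Complex.I*(2*(π:ℂ))) = (n:ℂ)*(2*(π:ℂ)*Complex.I) by ring]
    exact Complex.exp_int_mul_two_pi_mul_I n
  push_cast
  rw [h2]
  simp

lemma coeff_zero (N : ℕ) (c : ℤ → ℂ)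
    (h : ∀ t : ℝ, ∑ k ∈ Finset.Icc (-(N:ℤ)) (N:ℤ), c k * Complex.exp ((k:ℂ)*t*Complex.I) = 0) :
    ∀ m ∈ Finset.Icc (-(N:ℤ)) (N:ℤ), c m = 0 := by
  intro m hm
  have key : ∫ t in (0:ℝ)..(2*π),
      (∑ k ∈ Finset.Icc (-(N:ℤ)) (N:ℤ), c k * Complex.exp ((k:ℂ)*t*Complex.I))
        * Complex.exp (((-m : ℤ):ℂ)*t*Complex.I) = 0 := by
    simp [h]
  have expand : ∀ t : ℝ,
      (∑ k ∈ Finset.Icc (-(N:ℤ)) (N:ℤ), c k * Complex.exp ((k:ℂ)*t*Complex.I))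
        * Complex.exp (((-m : ℤ):ℂ)*t*Complex.I)
      = ∑ k ∈ Finset.Icc (-(N:ℤ)) (N:ℤ), c k * Complex.exp (((k - m : ℤ):ℂ)*t*Complex.I) := by
    intro t
    rw [Finset.sum_mul]
    refine Finset.sum_congr rfl fun k hk => ?_
    rw [mul_assoc, ← Complex.exp_add]
    congr 1
    push_cast
    ring
  rw [intervalIntegral.integral_congr (fun t _ => expand t)] at key
  rw [intervalIntegral.integral_finset_sum (fun k hk => by
    exact (Continuous.intervalIntegrable (by continuity) 0 (2*π)))] at key
  have eval : ∀ k ∈ Finset.Icc (-(N:ℤ)) (N:ℤ),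
      (∫ t in (0:ℝ)..(2*π), c k * Complex.exp (((k - m : ℤ):ℂ)*t*Complex.I))
      = if k = m then c k * (2*π) else 0 := by
    intro k hk
    rw [intervalIntegral.integral_const_mul]
    by_cases hkm : k = m
    · subst hkm
      simp
    · rw [exp_int_integral _ (sub_ne_zero.2 hkm)]
      simp [hkm]
  rw [Finset.sum_congr rfl eval, Finset.sum_ite_eq' _ m, if_pos hm] at key
  have h2π : ((2*π : ℝ) : ℂ) ≠ 0 := by
    exact_mod_cast mul_ne_zero two_ne_zero Real.pi_ne_zero
  exact (mul_eq_zero.1 key).resolve_right (by push_cast at h2π ⊢; exact h2π)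

/-- Fourier analysis of the Gutkin functional equation: if a trigonometric
polynomial `f(t) = Σ_{|k| ≤ N} b_k e^{ikt}` satisfies
`f'(t+α) + f'(t−α) = cot α · (f(t+α) − f(t−α))` for all `t`, where
`α ∈ (0, π)` with `sin α ≠ 0`, then every mode `k` with `b_k ≠ 0` satisfies
`k·cos(kα)·sin α = cos α·sin(kα)`. -/
theorem gutkin_fourier_condition (N : ℕ) (b : ℤ → ℂ) (α : ℝ)
    (hα : α ∈ Set.Ioo (0 : ℝ) π) (hsin : Real.sin α ≠ 0)
    (f : ℝ → ℂ)
    (hf : ∀ t : ℝ, f t = ∑ k ∈ Finset.Icc (-(N : ℤ)) (N : ℤ),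
      b k * Complex.exp ((k : ℂ) * (t : ℂ) * Complex.I))
    (heq : ∀ t : ℝ, deriv f (t + α) + deriv f (t - α) =
      ((Real.cos α / Real.sin α : ℝ) : ℂ) * (f (t + α) - f (t - α))) :
    ∀ k ∈ Finset.Icc (-(N : ℤ)) (N : ℤ), b k ≠ 0 →
      (k : ℝ) * Real.cos (k * α) * Real.sin α = Real.cos α * Real.sin (k * α) := by
  have hfe : f = fun t : ℝ => ∑ k ∈ Finset.Icc (-(N : ℤ)) (N : ℤ),
      b k * Complex.exp ((k : ℂ) * (t : ℂ) * Complex.I) := funext hf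
  -- derivative
  have hd : ∀ t : ℝ, HasDerivAt f
      (∑ k ∈ Finset.Icc (-(N : ℤ)) (N : ℤ),
        b k * ((k:ℂ) * Complex.I * Complex.exp ((k:ℂ) * (t:ℂ) * Complex.I))) t := by
    intro t
    rw [hfe]
    apply HasDerivAt.fun_sum
    intro k hk
    have h1 : HasDerivAt (fun s : ℝ => ((s : ℂ))) 1 t := by
      simpa using (hasDerivAt_id t).ofReal_comp
    have h2 : HasDerivAt (fun s : ℝ => (k:ℂ) * (s:ℂ) * Complex.I) ((k:ℂ) * 1 * Complex.I) t :=
      (h1.const_mul ((k:ℂ))).mul_const Complex.I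
    have h3 := h2.cexp
    have h4 := h3.const_mul (b k)
    convert h4 using 1
    · rfl
    ring
  have hderiv : ∀ t : ℝ, deriv f t = ∑ k ∈ Finset.Icc (-(N : ℤ)) (N : ℤ),
        b k * ((k:ℂ) * Complex.I * Complex.exp ((k:ℂ) * (t:ℂ) * Complex.I)) :=
    fun t => (hd t).deriv
  -- the combined coefficients
  set C : ℂ := ((Real.cos α / Real.sin α : ℝ) : ℂ) with hC
  set c : ℤ → ℂ := fun k => b k *
      ((k:ℂ) * Complex.I * (Complex.exp ((k:ℂ)*(α:ℂ)*Complex.I) + Complex.exp (-((k:ℂ)*(α:ℂ))*Complex.I))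
        - C * (Complex.exp ((k:ℂ)*(α:ℂ)*Complex.I) - Complex.exp (-((k:ℂ)*(α:ℂ))*Complex.I))) with hc
  have hsum : ∀ t : ℝ, ∑ k ∈ Finset.Icc (-(N:ℤ)) (N:ℤ),
      c k * Complex.exp ((k:ℂ)*t*Complex.I) = 0 := by
    intro t
    have h := heq t
    rw [hderiv, hderiv, hf, hf] at h
    have expand : ∀ k : ℤ, ∀ s : ℝ,
        Complex.exp ((k:ℂ)*((s:ℝ):ℂ)*Complex.I) = Complex.exp ((k:ℂ)*(s:ℂ)*Complex.I) :=
      fun _ _ => rfl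
    have e1 : ∀ k : ℤ, Complex.exp ((k:ℂ)*((t+α : ℝ):ℂ)*Complex.I)
        = Complex.exp ((k:ℂ)*(t:ℂ)*Complex.I) * Complex.exp ((k:ℂ)*(α:ℂ)*Complex.I) := by
      intro k
      rw [← Complex.exp_add]
      congr 1
      push_cast
      ring
    have e2 : ∀ k : ℤ, Complex.exp ((k:ℂ)*((t-α : ℝ):ℂ)*Complex.I)
        = Complex.exp ((k:ℂ)*(t:ℂ)*Complex.I) * Complex.exp (-((k:ℂ)*(α:ℂ))*Complex.I) := by
      intro k
      rw [← Complex.exp_add]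
      congr 1
      push_cast
      ring
    calc ∑ k ∈ Finset.Icc (-(N:ℤ)) (N:ℤ), c k * Complex.exp ((k:ℂ)*t*Complex.I)
        = (∑ k ∈ Finset.Icc (-(N:ℤ)) (N:ℤ),
            b k * ((k:ℂ) * Complex.I * Complex.exp ((k:ℂ)*((t+α : ℝ):ℂ)*Complex.I)))
          + (∑ k ∈ Finset.Icc (-(N:ℤ)) (N:ℤ),
            b k * ((k:ℂ) * Complex.I * Complex.exp ((k:ℂ)*((t-α : ℝ):ℂ)*Complex.I)))
          - C * ((∑ k ∈ Finset.Icc (-(N:ℤ)) (N:ℤ),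
              b k * Complex.exp ((k:ℂ)*((t+α : ℝ):ℂ)*Complex.I))
            - (∑ k ∈ Finset.Icc (-(N:ℤ)) (N:ℤ),
              b k * Complex.exp ((k:ℂ)*((t-α : ℝ):ℂ)*Complex.I))) := by
          rw [← Finset.sum_add_distrib, ← Finset.sum_sub_distrib, Finset.mul_sum,
            ← Finset.sum_sub_distrib]
          refine Finset.sum_congr rfl fun k hk => ?_
          rw [e1 k, e2 k, hc]
          ring
      _ = 0 := by rw [h]; ring
  have hczero := coeff_zero N c hsum
  intro k hk hbk
  have hck := hczero k hk
  rw [hc] at hck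
  have hbr : ((k:ℂ) * Complex.I * (Complex.exp ((k:ℂ)*(α:ℂ)*Complex.I) + Complex.exp (-((k:ℂ)*(α:ℂ))*Complex.I))
        - C * (Complex.exp ((k:ℂ)*(α:ℂ)*Complex.I) - Complex.exp (-((k:ℂ)*(α:ℂ))*Complex.I))) = 0 :=
    (mul_eq_zero.1 hck).resolve_left hbk
  -- rewrite exponentials via cos/sin
  have hx : ((k:ℂ)*(α:ℂ)) = (((k:ℝ)*α : ℝ) : ℂ) := by push_cast; ring
  rw [hx] at hbr
  simp only [Complex.exp_mul_I, Complex.cos_neg, Complex.sin_neg,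
    ← Complex.ofReal_cos, ← Complex.ofReal_sin] at hbr
  have hsC : ((Real.sin α : ℝ):ℂ) ≠ 0 := Complex.ofReal_ne_zero.2 hsin
  have hCs : C * ((Real.sin α : ℝ) : ℂ) = ((Real.cos α : ℝ) : ℂ) := by
    rw [hC, ← Complex.ofReal_mul, div_mul_cancel₀ _ hsin]
  have h2 : (2:ℂ) * Complex.I *
      ((((k:ℝ) * Real.cos ((k:ℝ)*α) * Real.sin α : ℝ) : ℂ) - ((Real.cos α * Real.sin ((k:ℝ)*α) : ℝ) : ℂ)) = 0 := by
    push_cast [← Complex.ofReal_sin, ← Complex.ofReal_cos]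
    linear_combination ((Real.sin α : ℝ) : ℂ) * hbr
      + 2 * ((Real.sin ((k:ℝ)*α) : ℝ) : ℂ) * Complex.I * hCs
  have h3 := (mul_eq_zero.1 h2).resolve_left
    (mul_ne_zero two_ne_zero Complex.I_ne_zero)
  have h4 := sub_eq_zero.mp h3
  exact_mod_cast h4
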